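/- arXiv:2602.16838 — 2 statements merged into one kernel-verified Lean document; each statement's English description precedes it below -/
import Mathlib

section
/- Let p > 0, let r ≥ 2, let (Ω_i, 𝓕_i, P_i), 1 ≤ i ≤ r, be probability spaces, let X_i : Ω_i → [0,∞) be measurable with P_r(X_r > 0) > 0, let E_i be measurable spaces, let F_i : Ω_i → E_i be measurable for 1 ≤ i ≤ r−1, let G : Ω_r × [0,∞) → E_r be measurable, and let B_i ⊆ E_i be measurable sets. Write S(ω) = ∑_{i=1}^{r−1} X_i(ω_i) and let Q = P_1 ⊗ ⋯ ⊗ P_r ⊗ μ_p on Ω_1 × ⋯ × Ω_r × [0,∞), with coordinate ℓ on the last factor. Then the event C = {S(ω) < ℓ ≤ S(ω) + X_r(ω_r)} has Q(C) > 0, and Q(F_1(ω_1) ∈ B_1, …, F_{r−1}(ω_{r−1}) ∈ B_{r−1}, G(ω_r, ℓ − S(ω)) ∈ B_r │ C) = ∏_{i=1}^{r−1} (P_i ⊗ μ_p)(F_i(ω_i) ∈ B_i │ X_i(ω_i) < ℓ_i) · (P_r ⊗ μ_p)(G(ω_r, ℓ_r) ∈ B_r │ ℓ_r ≤ X_r(ω_r)).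 -/
open MeasureTheory ProbabilityTheory NNReal ENNReal

section Aux
open Set Real

private lemma expMeasure_eq_withDensity (p : ℝ) :
    expMeasure p = volume.withDensity (exponentialPDF p) := rfl

private lemma expMeasure_Iic_zero (p : ℝ) : expMeasure p (Iic 0) = 0 := by
  have h1 : expMeasure p (Iio 0) = 0 := by
    rw [expMeasure_eq_withDensity, withDensity_apply _ measurableSet_Iio]
    exact lintegral_exponentialPDF_of_nonpos le_rfl
  have h2 : expMeasure p {(0 : ℝ)} = 0 := by
    rw [expMeasure_eq_withDensity, withDensity_apply _ (measurableSet_singleton 0)]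
    exact setLIntegral_measure_zero _ _ (measure_singleton 0)
  refine le_antisymm ?_ zero_le
  calc expMeasure p (Iic 0) ≤ expMeasure p (Iio 0 ∪ {0}) := by
        refine measure_mono fun x hx => ?_
        rcases lt_or_eq_of_le (Set.mem_Iic.mp hx) with h | h
        · exact Or.inl h
        · exact Or.inr h
    _ ≤ expMeasure p (Iio 0) + expMeasure p {0} := measure_union_le _ _
    _ = 0 := by rw [h1, h2, add_zero]

private lemma expMeasure_shift {p : ℝ} (hp : 0 < p) {s : ℝ} (hs : 0 ≤ s)
    {T : Set ℝ} (hT : MeasurableSet T) :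
    expMeasure p {ℓ | s < ℓ ∧ ℓ - s ∈ T} =
      ENNReal.ofReal (Real.exp (-(p * s))) * expMeasure p (T ∩ Set.Ioi 0) := by
  have hA : {ℓ : ℝ | s < ℓ ∧ ℓ - s ∈ T} = (fun ℓ : ℝ => ℓ - s) ⁻¹' (T ∩ Ioi 0) := by
    ext ℓ; simp [Set.mem_preimage, and_comm, sub_pos]
  have hmT : MeasurableSet ((fun ℓ : ℝ => ℓ - s) ⁻¹' (T ∩ Ioi 0)) :=
    (measurable_sub_const s) (hT.inter measurableSet_Ioi)
  rw [hA, expMeasure_eq_withDensity, withDensity_apply _ hmT,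
    withDensity_apply _ (hT.inter measurableSet_Ioi)]
  rw [← lintegral_indicator hmT, ← lintegral_indicator (hT.inter measurableSet_Ioi)]
  have hmp : MeasurePreserving (fun t : ℝ => t + s) volume volume :=
    measurePreserving_add_right volume s
  have hind : Measurable (((fun ℓ : ℝ => ℓ - s) ⁻¹' (T ∩ Ioi 0)).indicator (exponentialPDF p)) :=
    (measurable_exponentialPDFReal p).ennreal_ofReal.indicator hmT
  rw [← hmp.lintegral_comp hind]
  rw [← lintegral_const_mul' _ _ ENNReal.ofReal_ne_top]
  refine lintegral_congr fun t => ?_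
  by_cases ht : t ∈ T ∩ Ioi 0
  · have ht0 : 0 < t := ht.2
    have hmem : (t + s) ∈ (fun ℓ : ℝ => ℓ - s) ⁻¹' (T ∩ Ioi 0) := by
      simp [Set.mem_preimage, add_sub_cancel_right, ht.1, ht0]
    rw [Set.indicator_of_mem hmem, Set.indicator_of_mem ht]
    rw [exponentialPDF_of_nonneg (by linarith), exponentialPDF_of_nonneg ht0.le,
      ← ENNReal.ofReal_mul (exp_nonneg _)]
    congr 1
    rw [show -(p*(t+s)) = -(p*s) + -(p*t) by ring, Real.exp_add]
    ring
  · have hnmem : (t + s) ∉ (fun ℓ : ℝ => ℓ - s) ⁻¹' (T ∩ Ioi 0) := by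
      simp only [Set.mem_preimage, add_sub_cancel_right]; exact ht
    rw [Set.indicator_of_notMem hnmem, Set.indicator_of_notMem ht, mul_zero]

private lemma expMeasure_Ioi {p : ℝ} (hp : 0 < p) {s : ℝ} (hs : 0 ≤ s) :
    expMeasure p (Ioi s) = ENNReal.ofReal (Real.exp (-(p * s))) := by
  haveI := isProbabilityMeasure_expMeasure hp
  have h := expMeasure_shift hp hs (T := Set.univ) MeasurableSet.univ
  have h1 : {ℓ : ℝ | s < ℓ ∧ ℓ - s ∈ Set.univ} = Ioi s := by ext ℓ; simp
  have h2 : (Set.univ ∩ Ioi (0:ℝ)) = Ioi 0 := by simp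
  rw [h1, h2] at h
  have h3 : expMeasure p (Ioi (0:ℝ)) = 1 := by
    have := prob_compl_eq_one_sub (μ := expMeasure p) (s := Iic (0:ℝ)) measurableSet_Iic
    rw [compl_Iic] at this
    rw [this, expMeasure_Iic_zero, tsub_zero]
  rw [h, h3, mul_one]

private lemma expMeasure_Iic {p : ℝ} (hp : 0 < p) {x : ℝ} (hx : 0 ≤ x) :
    expMeasure p (Iic x) = 1 - ENNReal.ofReal (Real.exp (-(p * x))) := by
  haveI := isProbabilityMeasure_expMeasure hp
  have := prob_compl_eq_one_sub (μ := expMeasure p) (s := Ioi x) measurableSet_Ioi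
  rw [compl_Ioi] at this
  rw [this, expMeasure_Ioi hp hx]

private lemma lintegral_fin_pi_prod {n : ℕ} {E : Fin n → Type*} [∀ i, MeasurableSpace (E i)]
    (μ : ∀ i, Measure (E i)) [∀ i, SigmaFinite (μ i)]
    (f : ∀ i, E i → ℝ≥0∞) (hf : ∀ i, Measurable (f i)) :
    ∫⁻ x, ∏ i, f i (x i) ∂Measure.pi μ = ∏ i, ∫⁻ x, f i x ∂μ i := by
  induction n with
  | zero => simp
  | succ n ih =>
    have hF : Measurable fun x : (∀ i, E i) => ∏ i, f i (x i) :=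
      Finset.measurable_prod _ fun i _ => (hf i).comp (measurable_pi_apply i)
    rw [← ((MeasureTheory.measurePreserving_piFinSuccAbove μ 0).symm).lintegral_comp hF]
    simp_rw [MeasurableEquiv.piFinSuccAbove_symm_apply, Fin.insertNthEquiv,
      Fin.prod_univ_succ, Fin.insertNth_zero, Equiv.coe_fn_mk]
    simp only [Fin.cons_succ, Fin.cons_zero]
    change ∫⁻ (a : E 0 × ((j : Fin n) → E j.succ)), f 0 a.1 * ∏ x, f x.succ (a.2 x)
      ∂(μ 0).prod (Measure.pi fun j => μ j.succ) = _
    rw [lintegral_prod_mul (f := fun x : E 0 => f 0 x)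
      (g := fun y : (j : Fin n) → E j.succ => ∏ x, f x.succ (y x)) (hf 0).aemeasurable
      (Finset.measurable_prod _ fun i _ => ((hf i.succ).comp (measurable_pi_apply i))).aemeasurable]
    congr 1
    exact ih (μ := fun j => μ j.succ) (fun i => f i.succ) (fun i => hf _)

private lemma prod_shift {p : ℝ} (hp : 0 < p) {α : Type*} [MeasurableSpace α]
    (μ : Measure α) [SigmaFinite μ]
    {V : α → ℝ} (hV : Measurable V)
    {D : Set (α × ℝ)} (hD : MeasurableSet D)
    {s : ℝ} (hs : 0 ≤ s) :
    (μ.prod (expMeasure p)) {y : α × ℝ | s < y.2 ∧ y.2 ≤ s + V y.1 ∧ (y.1, y.2 - s) ∈ D} =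
      ENNReal.ofReal (Real.exp (-(p * s))) *
        (μ.prod (expMeasure p)) {y : α × ℝ | y.2 ≤ V y.1 ∧ y ∈ D} := by
  haveI := isProbabilityMeasure_expMeasure hp
  have hm1 : MeasurableSet {y : α × ℝ | s < y.2 ∧ y.2 ≤ s + V y.1 ∧ (y.1, y.2 - s) ∈ D} := by
    refine (measurableSet_lt measurable_const measurable_snd).inter
      ((measurableSet_le measurable_snd (measurable_const.add (hV.comp measurable_fst))).inter
        ((measurable_fst.prodMk (measurable_snd.sub measurable_const)) hD))
  have hm2 : MeasurableSet {y : α × ℝ | y.2 ≤ V y.1 ∧ y ∈ D} :=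
    (measurableSet_le measurable_snd (hV.comp measurable_fst)).inter hD
  rw [Measure.prod_apply hm1, Measure.prod_apply hm2,
    ← lintegral_const_mul' _ _ ENNReal.ofReal_ne_top]
  refine lintegral_congr fun a => ?_
  have hTa : MeasurableSet {t : ℝ | t ≤ V a ∧ (a, t) ∈ D} :=
    (measurableSet_le measurable_id measurable_const).inter
      ((measurable_const.prodMk measurable_id) hD)
  have h1 : (Prod.mk a ⁻¹' {y : α × ℝ | s < y.2 ∧ y.2 ≤ s + V y.1 ∧ (y.1, y.2 - s) ∈ D})
      = {ℓ : ℝ | s < ℓ ∧ ℓ - s ∈ {t : ℝ | t ≤ V a ∧ (a, t) ∈ D}} := by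
    ext ℓ
    simp only [Set.mem_preimage, Set.mem_setOf_eq]
    constructor
    · rintro ⟨h₁, h₂, h₃⟩; exact ⟨h₁, by linarith, h₃⟩
    · rintro ⟨h₁, h₂, h₃⟩; exact ⟨h₁, by linarith, h₃⟩
  have h2 : (Prod.mk a ⁻¹' {y : α × ℝ | y.2 ≤ V y.1 ∧ y ∈ D})
      = {t : ℝ | t ≤ V a ∧ (a, t) ∈ D} := rfl
  rw [h1, h2, expMeasure_shift hp hs hTa]
  congr 1
  exact measure_inter_conull (by rw [compl_Ioi]; exact expMeasure_Iic_zero p)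

end Aux

/-- The measure-theoretic core of Lemma 4.2 of the paper (equation (n70.5mp)).  With
`r ≥ 2` probability spaces (the first `r-1` indexed by `Fin (r-1)`, the `r`-th being
`Ωr`), nonnegative measurable `X_i` with `P_r(X_r > 0) > 0`, measurable
`F_i : Ω_i → E_i` (`1 ≤ i ≤ r-1`), measurable `G : Ω_r × [0,∞) → E_r`, measurable sets
`B_i`, `S(ω) = ∑_{i=1}^{r-1} X_i(ω_i)`, `μ_p` the exponential distribution of rate
`p > 0`, and `Q = P_1 ⊗ ⋯ ⊗ P_r ⊗ μ_p`: the event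
`C = {S(ω) < ℓ ≤ S(ω) + X_r(ω_r)}` has `Q(C) > 0` and
`Q(F_1(ω_1) ∈ B_1, …, F_{r-1}(ω_{r-1}) ∈ B_{r-1}, G(ω_r, ℓ - S(ω)) ∈ B_r │ C)
  = ∏_i (P_i ⊗ μ_p)(F_i ∈ B_i │ X_i < ℓ_i) · (P_r ⊗ μ_p)(G ∈ B_r │ ℓ_r ≤ X_r)`. -/
theorem cond_rebirth_exponential_factorization
    (p : ℝ) (hp : 0 < p)
    (r : ℕ) (hr : 2 ≤ r)
    (Ω : Fin (r - 1) → Type*) [∀ i, MeasurableSpace (Ω i)]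
    (P : ∀ i, Measure (Ω i)) [∀ i, IsProbabilityMeasure (P i)]
    (Ωr : Type*) [MeasurableSpace Ωr]
    (Pr : Measure Ωr) [IsProbabilityMeasure Pr]
    (X : ∀ i, Ω i → ℝ) (hX : ∀ i, Measurable (X i)) (hX_nonneg : ∀ i ω, 0 ≤ X i ω)
    (Xr : Ωr → ℝ) (hXr : Measurable Xr) (hXr_nonneg : ∀ ω, 0 ≤ Xr ω)
    (hXr_pos : 0 < Pr {ω | 0 < Xr ω})
    (E : Fin (r - 1) → Type*) [∀ i, MeasurableSpace (E i)]
    (Er : Type*) [MeasurableSpace Er]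
    (F : ∀ i, Ω i → E i) (hF : ∀ i, Measurable (F i))
    (G : Ωr → ℝ → Er) (hG : Measurable fun y : Ωr × ℝ => G y.1 y.2)
    (B : ∀ i, Set (E i)) (hB : ∀ i, MeasurableSet (B i))
    (Br : Set Er) (hBr : MeasurableSet Br) :
    0 < ((Measure.pi P).prod (Pr.prod (expMeasure p)))
          {z : (∀ i, Ω i) × (Ωr × ℝ) |
            (∑ i, X i (z.1 i)) < z.2.2 ∧ z.2.2 ≤ (∑ i, X i (z.1 i)) + Xr z.2.1} ∧
    ((Measure.pi P).prod (Pr.prod (expMeasure p)))[|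
        {z : (∀ i, Ω i) × (Ωr × ℝ) |
          (∑ i, X i (z.1 i)) < z.2.2 ∧ z.2.2 ≤ (∑ i, X i (z.1 i)) + Xr z.2.1}]
      {z : (∀ i, Ω i) × (Ωr × ℝ) |
        (∀ i, F i (z.1 i) ∈ B i) ∧ G z.2.1 (z.2.2 - ∑ i, X i (z.1 i)) ∈ Br}
    = (∏ i, ((P i).prod (expMeasure p))[|{y : Ω i × ℝ | X i y.1 < y.2}]
          {y : Ω i × ℝ | F i y.1 ∈ B i})
      * (Pr.prod (expMeasure p))[|{y : Ωr × ℝ | y.2 ≤ Xr y.1}]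
          {y : Ωr × ℝ | G y.1 y.2 ∈ Br} := by
  haveI : IsProbabilityMeasure (expMeasure p) := isProbabilityMeasure_expMeasure hp
  -- basic measurability
  have hS : Measurable fun ω : ∀ i, Ω i => ∑ i, X i (ω i) :=
    Finset.measurable_sum _ fun i _ => (hX i).comp (measurable_pi_apply i)
  have hS0 : ∀ ω : ∀ i, Ω i, 0 ≤ ∑ i, X i (ω i) :=
    fun ω => Finset.sum_nonneg fun i _ => hX_nonneg i _
  have hSf : Measurable fun z : (∀ i, Ω i) × (Ωr × ℝ) => ∑ i, X i (z.1 i) :=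
    hS.comp measurable_fst
  have hz21 : Measurable fun z : (∀ i, Ω i) × (Ωr × ℝ) => z.2.1 :=
    measurable_fst.comp measurable_snd
  have hz22 : Measurable fun z : (∀ i, Ω i) × (Ωr × ℝ) => z.2.2 :=
    measurable_snd.comp measurable_snd
  have hmC : MeasurableSet {z : (∀ i, Ω i) × (Ωr × ℝ) |
      (∑ i, X i (z.1 i)) < z.2.2 ∧ z.2.2 ≤ (∑ i, X i (z.1 i)) + Xr z.2.1} :=
    (measurableSet_lt hSf hz22).inter
      (measurableSet_le hz22 (hSf.add (hXr.comp hz21)))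
  have hmA : MeasurableSet {z : (∀ i, Ω i) × (Ωr × ℝ) |
      (∀ i, F i (z.1 i) ∈ B i) ∧ G z.2.1 (z.2.2 - ∑ i, X i (z.1 i)) ∈ Br} := by
    have h1 : MeasurableSet {z : (∀ i, Ω i) × (Ωr × ℝ) | ∀ i, F i (z.1 i) ∈ B i} := by
      rw [Set.setOf_forall]
      exact MeasurableSet.iInter fun i =>
        ((hF i).comp ((measurable_pi_apply i).comp measurable_fst)) (hB i)
    exact h1.inter ((hG.comp (hz21.prodMk (hz22.sub hSf))) hBr)
  have hmXi : ∀ i, MeasurableSet {y : Ω i × ℝ | X i y.1 < y.2} :=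
    fun i => measurableSet_lt ((hX i).comp measurable_fst) measurable_snd
  have hmFi : ∀ i, MeasurableSet {y : Ω i × ℝ | F i y.1 ∈ B i} :=
    fun i => ((hF i).comp measurable_fst) (hB i)
  have hmXr : MeasurableSet {y : Ωr × ℝ | y.2 ≤ Xr y.1} :=
    measurableSet_le measurable_snd (hXr.comp measurable_fst)
  have hmGr : MeasurableSet {y : Ωr × ℝ | G y.1 y.2 ∈ Br} := hG hBr
  -- the density functions
  set g : ∀ i, Ω i → ℝ≥0∞ := fun i ω => ENNReal.ofReal (Real.exp (-(p * X i ω))) with hgdef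
  have hg : ∀ i, Measurable (g i) := fun i =>
    (Real.measurable_exp.comp (((hX i).const_mul p).neg)).ennreal_ofReal
  -- left conditional denominators
  have hb : ∀ i, ((P i).prod (expMeasure p)) {y : Ω i × ℝ | X i y.1 < y.2}
      = ∫⁻ ω, g i ω ∂P i := by
    intro i
    rw [Measure.prod_apply (hmXi i)]
    refine lintegral_congr fun ω => ?_
    have h1 : Prod.mk ω ⁻¹' {y : Ω i × ℝ | X i y.1 < y.2} = Set.Ioi (X i ω) := rfl
    rw [h1, expMeasure_Ioi hp (hX_nonneg i ω)]
  have ha : ∀ i, ((P i).prod (expMeasure p))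
        ({y : Ω i × ℝ | X i y.1 < y.2} ∩ {y : Ω i × ℝ | F i y.1 ∈ B i})
      = ∫⁻ ω, (F i ⁻¹' B i).indicator (g i) ω ∂P i := by
    intro i
    rw [Measure.prod_apply ((hmXi i).inter (hmFi i))]
    refine lintegral_congr fun ω => ?_
    by_cases hω : F i ω ∈ B i
    · have h1 : Prod.mk ω ⁻¹' ({y : Ω i × ℝ | X i y.1 < y.2} ∩ {y : Ω i × ℝ | F i y.1 ∈ B i})
          = Set.Ioi (X i ω) := by
        ext ℓ; simp [hω, Set.mem_Ioi]
      rw [h1, expMeasure_Ioi hp (hX_nonneg i ω),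
        Set.indicator_of_mem (show ω ∈ F i ⁻¹' B i from hω) (g i)]
    · have h1 : Prod.mk ω ⁻¹' ({y : Ω i × ℝ | X i y.1 < y.2} ∩ {y : Ω i × ℝ | F i y.1 ∈ B i})
          = ∅ := by
        ext ℓ; simp [hω]
      rw [h1, measure_empty, Set.indicator_of_notMem (show ω ∉ F i ⁻¹' B i from hω) (g i)]
  -- product of exponentials
  have hprodg : ∀ ω : ∀ i, Ω i,
      ENNReal.ofReal (Real.exp (-(p * ∑ i, X i (ω i)))) = ∏ i, g i (ω i) := by
    intro ω
    rw [show -(p * ∑ i, X i (ω i)) = ∑ i, -(p * X i (ω i)) by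
      rw [Finset.mul_sum, ← Finset.sum_neg_distrib]]
    rw [Real.exp_sum, ENNReal.ofReal_prod_of_nonneg fun i _ => Real.exp_nonneg _]
  -- denominator factorization
  have hDen : ((Measure.pi P).prod (Pr.prod (expMeasure p)))
        {z : (∀ i, Ω i) × (Ωr × ℝ) |
          (∑ i, X i (z.1 i)) < z.2.2 ∧ z.2.2 ≤ (∑ i, X i (z.1 i)) + Xr z.2.1}
      = (∏ i, ∫⁻ ω, g i ω ∂P i) * (Pr.prod (expMeasure p)) {y : Ωr × ℝ | y.2 ≤ Xr y.1} := by
    rw [Measure.prod_apply hmC]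
    have key : ∀ ω : ∀ i, Ω i,
        (Pr.prod (expMeasure p)) (Prod.mk ω ⁻¹' {z : (∀ i, Ω i) × (Ωr × ℝ) |
          (∑ i, X i (z.1 i)) < z.2.2 ∧ z.2.2 ≤ (∑ i, X i (z.1 i)) + Xr z.2.1})
        = (∏ i, g i (ω i)) * (Pr.prod (expMeasure p)) {y : Ωr × ℝ | y.2 ≤ Xr y.1} := by
      intro ω
      have hpre : Prod.mk ω ⁻¹' {z : (∀ i, Ω i) × (Ωr × ℝ) |
            (∑ i, X i (z.1 i)) < z.2.2 ∧ z.2.2 ≤ (∑ i, X i (z.1 i)) + Xr z.2.1}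
          = {y : Ωr × ℝ | (∑ i, X i (ω i)) < y.2 ∧ y.2 ≤ (∑ i, X i (ω i)) + Xr y.1
              ∧ (y.1, y.2 - ∑ i, X i (ω i)) ∈ (Set.univ : Set (Ωr × ℝ))} := by
        ext y; simp only [Set.mem_preimage, Set.mem_setOf_eq, Set.mem_univ, and_true]
      rw [hpre, prod_shift hp Pr hXr MeasurableSet.univ (hS0 ω), hprodg ω]
      congr 1
      refine congrArg _ ?_
      ext y; simp
    rw [lintegral_congr key, lintegral_mul_const' _ _ (measure_ne_top _ _),
      lintegral_fin_pi_prod P g hg]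
  -- numerator factorization
  have hNum : ((Measure.pi P).prod (Pr.prod (expMeasure p)))
        ({z : (∀ i, Ω i) × (Ωr × ℝ) |
          (∑ i, X i (z.1 i)) < z.2.2 ∧ z.2.2 ≤ (∑ i, X i (z.1 i)) + Xr z.2.1}
          ∩ {z : (∀ i, Ω i) × (Ωr × ℝ) |
          (∀ i, F i (z.1 i) ∈ B i) ∧ G z.2.1 (z.2.2 - ∑ i, X i (z.1 i)) ∈ Br})
      = (∏ i, ∫⁻ ω, (F i ⁻¹' B i).indicator (g i) ω ∂P i)
        * (Pr.prod (expMeasure p))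
            ({y : Ωr × ℝ | y.2 ≤ Xr y.1} ∩ {y : Ωr × ℝ | G y.1 y.2 ∈ Br}) := by
    rw [Measure.prod_apply (hmC.inter hmA)]
    have key : ∀ ω : ∀ i, Ω i,
        (Pr.prod (expMeasure p)) (Prod.mk ω ⁻¹' ({z : (∀ i, Ω i) × (Ωr × ℝ) |
          (∑ i, X i (z.1 i)) < z.2.2 ∧ z.2.2 ≤ (∑ i, X i (z.1 i)) + Xr z.2.1}
          ∩ {z : (∀ i, Ω i) × (Ωr × ℝ) |
          (∀ i, F i (z.1 i) ∈ B i) ∧ G z.2.1 (z.2.2 - ∑ i, X i (z.1 i)) ∈ Br}))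
        = (∏ i, (F i ⁻¹' B i).indicator (g i) (ω i))
          * (Pr.prod (expMeasure p))
              ({y : Ωr × ℝ | y.2 ≤ Xr y.1} ∩ {y : Ωr × ℝ | G y.1 y.2 ∈ Br}) := by
      intro ω
      by_cases hω : ∀ i, F i (ω i) ∈ B i
      · have hpre : Prod.mk ω ⁻¹' ({z : (∀ i, Ω i) × (Ωr × ℝ) |
              (∑ i, X i (z.1 i)) < z.2.2 ∧ z.2.2 ≤ (∑ i, X i (z.1 i)) + Xr z.2.1}
              ∩ {z : (∀ i, Ω i) × (Ωr × ℝ) |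
              (∀ i, F i (z.1 i) ∈ B i) ∧ G z.2.1 (z.2.2 - ∑ i, X i (z.1 i)) ∈ Br})
            = {y : Ωr × ℝ | (∑ i, X i (ω i)) < y.2 ∧ y.2 ≤ (∑ i, X i (ω i)) + Xr y.1
                ∧ (y.1, y.2 - ∑ i, X i (ω i)) ∈ {y : Ωr × ℝ | G y.1 y.2 ∈ Br}} := by
          ext y
          simp only [Set.mem_preimage, Set.mem_inter_iff, Set.mem_setOf_eq]
          tauto
        rw [hpre, prod_shift hp Pr hXr hmGr (hS0 ω), hprodg ω]
        congr 1
        · exact Finset.prod_congr rfl fun i _ =>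
            (Set.indicator_of_mem (show ω i ∈ F i ⁻¹' B i from hω i) (g i)).symm
      · have hpre : Prod.mk ω ⁻¹' ({z : (∀ i, Ω i) × (Ωr × ℝ) |
              (∑ i, X i (z.1 i)) < z.2.2 ∧ z.2.2 ≤ (∑ i, X i (z.1 i)) + Xr z.2.1}
              ∩ {z : (∀ i, Ω i) × (Ωr × ℝ) |
              (∀ i, F i (z.1 i) ∈ B i) ∧ G z.2.1 (z.2.2 - ∑ i, X i (z.1 i)) ∈ Br})
            = ∅ := by
          ext y
          simp only [Set.mem_preimage, Set.mem_inter_iff, Set.mem_setOf_eq, Set.mem_empty_iff_false,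
            iff_false]
          tauto
        obtain ⟨i0, hi0⟩ := not_forall.mp hω
        rw [hpre, measure_empty]
        rw [Finset.prod_eq_zero (Finset.mem_univ i0)
          (Set.indicator_of_notMem (show ω i0 ∉ F i0 ⁻¹' B i0 from hi0) (g i0)), zero_mul]
    rw [lintegral_congr key, lintegral_mul_const' _ _ (measure_ne_top _ _),
      lintegral_fin_pi_prod P _ (fun i => (hg i).indicator ((hF i) (hB i)))]
  -- positivity facts
  have hbpos : ∀ i, 0 < ∫⁻ ω, g i ω ∂P i := by
    intro i
    rw [lintegral_pos_iff_support (hg i)]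
    have hsupp : Function.support (g i) = Set.univ :=
      Set.eq_univ_of_forall fun ω => (ENNReal.ofReal_pos.mpr (Real.exp_pos _)).ne'
    rw [hsupp]
    simp [measure_univ]
  have hbnetop : ∀ i, (∫⁻ ω, g i ω ∂P i) ≠ ∞ := by
    intro i; rw [← hb i]; exact measure_ne_top _ _
  have hMdpos : 0 < (Pr.prod (expMeasure p)) {y : Ωr × ℝ | y.2 ≤ Xr y.1} := by
    rw [Measure.prod_apply hmXr]
    have heq : ∀ ωr, (expMeasure p) (Prod.mk ωr ⁻¹' {y : Ωr × ℝ | y.2 ≤ Xr y.1})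
        = 1 - ENNReal.ofReal (Real.exp (-(p * Xr ωr))) := by
      intro ωr
      have h1 : Prod.mk ωr ⁻¹' {y : Ωr × ℝ | y.2 ≤ Xr y.1} = Set.Iic (Xr ωr) := rfl
      rw [h1, expMeasure_Iic hp (hXr_nonneg ωr)]
    have hmeasf : Measurable fun ωr => (1 : ℝ≥0∞) - ENNReal.ofReal (Real.exp (-(p * Xr ωr))) :=
      measurable_const.sub (Real.measurable_exp.comp ((hXr.const_mul p).neg)).ennreal_ofReal
    rw [lintegral_congr heq, lintegral_pos_iff_support hmeasf]
    refine lt_of_lt_of_le hXr_pos (measure_mono ?_)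
    intro ωr hωr
    have h1 : ENNReal.ofReal (Real.exp (-(p * Xr ωr))) < 1 := by
      rw [← ENNReal.ofReal_one]
      exact (ENNReal.ofReal_lt_ofReal_iff one_pos).mpr
        (Real.exp_lt_one_iff.mpr (by nlinarith [Set.mem_setOf_eq ▸ hωr]))
    exact (tsub_pos_iff_lt.mpr h1).ne'
  have hMdnetop : (Pr.prod (expMeasure p)) {y : Ωr × ℝ | y.2 ≤ Xr y.1} ≠ ∞ :=
    measure_ne_top _ _
  have hDenpos : 0 < ((Measure.pi P).prod (Pr.prod (expMeasure p)))
      {z : (∀ i, Ω i) × (Ωr × ℝ) |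
        (∑ i, X i (z.1 i)) < z.2.2 ∧ z.2.2 ≤ (∑ i, X i (z.1 i)) + Xr z.2.1} := by
    rw [hDen]
    exact ENNReal.mul_pos (Finset.prod_ne_zero_iff.mpr fun i _ => (hbpos i).ne') hMdpos.ne'
  refine ⟨hDenpos, ?_⟩
  -- rewrite both sides via cond_apply
  rw [cond_apply hmC]
  have hRHS1 : (∏ i, ((P i).prod (expMeasure p))[|{y : Ω i × ℝ | X i y.1 < y.2}]
        {y : Ω i × ℝ | F i y.1 ∈ B i})
      = ∏ i, (∫⁻ ω, g i ω ∂P i)⁻¹ * ∫⁻ ω, (F i ⁻¹' B i).indicator (g i) ω ∂P i := by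
    refine Finset.prod_congr rfl fun i _ => ?_
    rw [cond_apply (hmXi i), hb i, ha i]
  rw [hRHS1, cond_apply hmXr, hNum, hDen]
  rw [ENNReal.mul_inv (Or.inl (Finset.prod_ne_zero_iff.mpr fun i _ => (hbpos i).ne'))
    (Or.inr hMdpos.ne')]
  rw [ENNReal.prod_inv_distrib fun i _ j _ _ => Or.inl (hbpos i).ne']
  rw [Finset.prod_mul_distrib]
  ring
end

section
/- Let p > 0, let r ≥ 2, let (Ω_i, 𝓕_i, P_i), 1 ≤ i ≤ r, be probability spaces, let X_i : Ω_i → [0,∞) be measurable with P_r(X_r > 0) > 0, let I be a nonempty set, and equip the function space ℝ^I with the product σ-algebra (the σ-algebra of cylinder sets) and pointwise addition. Let F_i : Ω_i → ℝ^I for 1 ≤ i ≤ r−1 and G : Ω_r × [0,∞) → ℝ^I be measurable, and let B ⊆ ℝ^I be measurable. Write S(ω) = ∑_{i=1}^{r−1} X_i(ω_i) and let Q = P_1 ⊗ ⋯ ⊗ P_r ⊗ μ_p, with coordinate ℓ on the last factor. If Q( ∑_{i=1}^{r−1} F_i(ω_i) + G(ω_r, ℓ) ∈ B ) = 1, then Q(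 ∑_{i=1}^{r−1} F_i(ω_i) + G(ω_r, ℓ − S(ω)) ∈ B │ S(ω) < ℓ ≤ S(ω) + X_r(ω_r) ) = 1. -/
open MeasureTheory ProbabilityTheory NNReal ENNReal

open MeasureTheory ProbabilityTheory NNReal ENNReal Real Set

lemma expMeasure_apply'' (p : ℝ) {s : Set ℝ} (hs : MeasurableSet s) :
    expMeasure p s = ∫⁻ x in s, exponentialPDF p x := by
  rw [expMeasure, gammaMeasure, withDensity_apply _ hs]; rfl

lemma measurable_exponentialPDF (p : ℝ) : Measurable (exponentialPDF p) :=
  (measurable_exponentialPDFReal p).ennreal_ofReal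

lemma exp_aux_le (p : ℝ) (hp : 0 < p) {a b : ℝ} (ha : 0 ≤ a) {T : Set ℝ}
    (hT : MeasurableSet T) :
    expMeasure p {x | a < x ∧ x ≤ a + b ∧ x - a ∈ T} ≤ expMeasure p T := by
  have hSm : MeasurableSet {x : ℝ | a < x ∧ x ≤ a + b ∧ x - a ∈ T} :=
    measurableSet_Ioi.inter (measurableSet_Iic.inter
      ((measurable_id.sub measurable_const) hT))
  have hTm : MeasurableSet (T ∩ Ioi (0:ℝ)) := hT.inter measurableSet_Ioi
  have hgm : Measurable fun t : ℝ => ENNReal.ofReal (p * rexp (-(p * t))) :=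
    (((measurable_const.mul (measurable_id.const_mul p).neg.exp))).ennreal_ofReal
  calc expMeasure p {x | a < x ∧ x ≤ a + b ∧ x - a ∈ T}
      = ∫⁻ x in {x | a < x ∧ x ≤ a + b ∧ x - a ∈ T}, exponentialPDF p x :=
        expMeasure_apply'' p hSm
    _ ≤ ∫⁻ x in {x | a < x ∧ x ≤ a + b ∧ x - a ∈ T},
          ENNReal.ofReal (p * rexp (-(p * (x - a)))) := by
        refine setLIntegral_mono (hgm.comp (measurable_id.sub measurable_const)) ?_
        intro x hx
        rw [exponentialPDF_of_nonneg (le_of_lt (lt_of_le_of_lt ha hx.1))]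
        exact ENNReal.ofReal_le_ofReal (mul_le_mul_of_nonneg_left
          (Real.exp_le_exp.mpr (by nlinarith)) hp.le)
    _ ≤ ∫⁻ x in (fun x => x - a) ⁻¹' (T ∩ Ioi (0:ℝ)),
          ENNReal.ofReal (p * rexp (-(p * (x - a)))) := by
        refine lintegral_mono_set fun x hx => ⟨hx.2.2, ?_⟩
        simpa using sub_pos.mpr hx.1
    _ = ∫⁻ x, ((T ∩ Ioi (0:ℝ)).indicator
          (fun t => ENNReal.ofReal (p * rexp (-(p * t))))) (x - a) := by
        have hpre : MeasurableSet ((fun x : ℝ => x - a) ⁻¹' (T ∩ Ioi (0:ℝ))) :=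
          (by fun_prop : Measurable fun x : ℝ => x - a) hTm
        rw [← lintegral_indicator hpre]
        exact lintegral_congr fun x => rfl
    _ = ∫⁻ t, ((T ∩ Ioi (0:ℝ)).indicator
          (fun t => ENNReal.ofReal (p * rexp (-(p * t))))) t :=
        (measurePreserving_sub_right volume a).lintegral_comp (hgm.indicator hTm)
    _ = ∫⁻ t in T ∩ Ioi (0:ℝ), ENNReal.ofReal (p * rexp (-(p * t))) :=
        lintegral_indicator hTm _
    _ = ∫⁻ t in T ∩ Ioi (0:ℝ), exponentialPDF p t := by
        refine setLIntegral_congr_fun hTm (fun t ht => ?_)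
        rw [exponentialPDF_of_nonneg (le_of_lt ht.2)]
    _ ≤ ∫⁻ t in T, exponentialPDF p t := lintegral_mono_set inter_subset_left
    _ = expMeasure p T := (expMeasure_apply'' p hT).symm

lemma exp_aux_pos (p : ℝ) (hp : 0 < p) {a b : ℝ} (ha : 0 ≤ a) (hb : 0 < b) :
    0 < expMeasure p (Set.Ioc a (a + b)) := by
  have h2 : ∫⁻ _x in Ioc a (a+b), (ENNReal.ofReal (p * rexp (-(p * (a+b)))) : ℝ≥0∞)
      ≤ ∫⁻ x in Ioc a (a+b), exponentialPDF p x := by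
    refine setLIntegral_mono (measurable_exponentialPDF p) fun x hx => ?_
    rw [exponentialPDF_of_nonneg (by linarith [hx.1])]
    exact ENNReal.ofReal_le_ofReal (mul_le_mul_of_nonneg_left
      (Real.exp_le_exp.mpr (by nlinarith [hx.2])) hp.le)
  rw [setLIntegral_const, Real.volume_Ioc] at h2
  refine lt_of_lt_of_le ?_ ((expMeasure_apply'' p measurableSet_Ioc).symm ▸ h2)
  refine ENNReal.mul_pos ?_ ?_
  · simp only [ne_eq, ENNReal.ofReal_eq_zero, not_le]
    positivity
  · simp only [ne_eq, ENNReal.ofReal_eq_zero, not_le]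
    linarith


/-- The abstraction of Theorem 4.3 (theo-n1.1) of the paper.  With `r ≥ 2` probability
spaces (the first `r-1` indexed by `Fin (r-1)`, the `r`-th being `Ωr`), nonnegative
measurable `X_i` with `P_r(X_r > 0) > 0`, measurable maps `F_i : Ω_i → ℝ^I` and
`G : Ω_r × [0,∞) → ℝ^I` into the function space `ℝ^I` with the σ-algebra of cylinder
sets and pointwise addition, measurable `B ⊆ ℝ^I`, `S(ω) = ∑_{i=1}^{r-1} X_i(ω_i)`,
`μ_p` the exponential distribution of rate `p > 0`, and `Q = P_1 ⊗ ⋯ ⊗ P_r ⊗ μ_p`: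
if `Q(∑_{i=1}^{r-1} F_i(ω_i) + G(ω_r, ℓ) ∈ B) = 1` then
`Q(∑_{i=1}^{r-1} F_i(ω_i) + G(ω_r, ℓ - S(ω)) ∈ B │ S(ω) < ℓ ≤ S(ω) + X_r(ω_r)) = 1`. -/
theorem cond_rebirth_exponential_ae_transfer
    (p : ℝ) (hp : 0 < p)
    (r : ℕ) (hr : 2 ≤ r)
    (Ω : Fin (r - 1) → Type*) [∀ i, MeasurableSpace (Ω i)]
    (P : ∀ i, Measure (Ω i)) [∀ i, IsProbabilityMeasure (P i)]
    (Ωr : Type*) [MeasurableSpace Ωr]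
    (Pr : Measure Ωr) [IsProbabilityMeasure Pr]
    (X : ∀ i, Ω i → ℝ) (hX : ∀ i, Measurable (X i)) (hX_nonneg : ∀ i ω, 0 ≤ X i ω)
    (Xr : Ωr → ℝ) (hXr : Measurable Xr) (hXr_nonneg : ∀ ω, 0 ≤ Xr ω)
    (hXr_pos : 0 < Pr {ω | 0 < Xr ω})
    (I : Type*) [Nonempty I]
    (F : ∀ i, Ω i → (I → ℝ)) (hF : ∀ i, Measurable (F i))
    (G : Ωr → ℝ → (I → ℝ)) (hG : Measurable fun y : Ωr × ℝ => G y.1 y.2)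
    (B : Set (I → ℝ)) (hB : MeasurableSet B)
    (hone : ((Measure.pi P).prod (Pr.prod (expMeasure p)))
        {z : (∀ i, Ω i) × (Ωr × ℝ) |
          (∑ i, F i (z.1 i)) + G z.2.1 z.2.2 ∈ B} = 1) :
    ((Measure.pi P).prod (Pr.prod (expMeasure p)))[|
        {z : (∀ i, Ω i) × (Ωr × ℝ) |
          (∑ i, X i (z.1 i)) < z.2.2 ∧ z.2.2 ≤ (∑ i, X i (z.1 i)) + Xr z.2.1}]
      {z : (∀ i, Ω i) × (Ωr × ℝ) |
        (∑ i, F i (z.1 i)) + G z.2.1 (z.2.2 - ∑ i, X i (z.1 i)) ∈ B} = 1 := by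
  classical
  haveI : IsProbabilityMeasure (expMeasure p) := isProbabilityMeasure_expMeasure hp
  set μ : Measure (∀ i, Ω i) := Measure.pi P with hμdef
  set ν : Measure (Ωr × ℝ) := Pr.prod (expMeasure p) with hνdef
  set Q : Measure ((∀ i, Ω i) × (Ωr × ℝ)) := μ.prod ν with hQdef
  have hS : Measurable fun ω : ∀ i, Ω i => ∑ i, X i (ω i) :=
    Finset.measurable_sum _ fun i _ => (hX i).comp (measurable_pi_apply i)
  have hFsum : Measurable fun ω : ∀ i, Ω i => ∑ i, F i (ω i) :=
    Finset.measurable_sum _ fun i _ => (hF i).comp (measurable_pi_apply i)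
  have hSz : Measurable fun z : (∀ i, Ω i) × (Ωr × ℝ) => ∑ i, X i (z.1 i) :=
    hS.comp measurable_fst
  have hLz : Measurable fun z : (∀ i, Ω i) × (Ωr × ℝ) => z.2.2 := measurable_snd.snd
  have hXrz : Measurable fun z : (∀ i, Ω i) × (Ωr × ℝ) => Xr z.2.1 :=
    hXr.comp measurable_snd.fst
  set A : Set ((∀ i, Ω i) × (Ωr × ℝ)) :=
    {z | (∑ i, X i (z.1 i)) < z.2.2 ∧ z.2.2 ≤ (∑ i, X i (z.1 i)) + Xr z.2.1} with hAdef
  have hA : MeasurableSet A :=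
    (measurableSet_lt hSz hLz).inter (measurableSet_le hLz (hSz.add hXrz))
  have hC₀ : MeasurableSet {z : (∀ i, Ω i) × (Ωr × ℝ) |
      (∑ i, F i (z.1 i)) + G z.2.1 z.2.2 ∈ B} :=
    ((hFsum.comp measurable_fst).add (hG.comp measurable_snd)) hB
  set C : Set ((∀ i, Ω i) × (Ωr × ℝ)) :=
    {z | (∑ i, F i (z.1 i)) + G z.2.1 (z.2.2 - ∑ i, X i (z.1 i)) ∈ B} with hCdef
  have hC : MeasurableSet C :=
    ((hFsum.comp measurable_fst).add
      (hG.comp ((measurable_snd.fst).prodMk (hLz.sub hSz)))) hB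
  -- positivity of Q A
  have hQA_pos : Q A ≠ 0 := by
    obtain ⟨n, hn⟩ : ∃ n : ℕ, Pr {ω | ((n : ℝ) + 1)⁻¹ ≤ Xr ω} ≠ 0 := by
      by_contra h
      push_neg at h
      have hsub : {ω | 0 < Xr ω} ⊆ ⋃ n : ℕ, {ω | ((n : ℝ) + 1)⁻¹ ≤ Xr ω} := by
        intro ω hω
        obtain ⟨n, hn⟩ := exists_nat_gt (Xr ω)⁻¹
        refine Set.mem_iUnion.mpr ⟨n, ?_⟩
        have h1 : (0 : ℝ) < (n : ℝ) + 1 := by positivity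
        have h2 : (Xr ω)⁻¹ < (n : ℝ) + 1 := hn.trans (lt_add_one _)
        have h3 := mul_lt_mul_of_pos_left h2 hω
        rw [mul_inv_cancel₀ (ne_of_gt hω)] at h3
        show ((n : ℝ) + 1)⁻¹ ≤ Xr ω
        rw [inv_eq_one_div, div_le_iff₀ h1]
        linarith
      have h0 : Pr {ω | 0 < Xr ω} = 0 :=
        measure_mono_null hsub (measure_iUnion_null fun n => h n)
      rw [h0] at hXr_pos
      exact lt_irrefl _ hXr_pos
    set δ : ℝ := ((n : ℝ) + 1)⁻¹ with hδdef
    have hδ : 0 < δ := by positivity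
    obtain ⟨k, hk⟩ : ∃ k : ℕ, μ {ω | (k : ℝ) * (δ / 2) ≤ (∑ i, X i (ω i)) ∧
        (∑ i, X i (ω i)) < ((k : ℝ) + 1) * (δ / 2)} ≠ 0 := by
      by_contra h
      push_neg at h
      have hsub : (Set.univ : Set (∀ i, Ω i)) ⊆ ⋃ k : ℕ, {ω | (k : ℝ) * (δ / 2) ≤
          (∑ i, X i (ω i)) ∧ (∑ i, X i (ω i)) < ((k : ℝ) + 1) * (δ / 2)} := by
        intro ω _
        have hS0 : 0 ≤ ∑ i, X i (ω i) := Finset.sum_nonneg fun i _ => hX_nonneg i _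
        have hd2 : (0 : ℝ) < δ / 2 := by positivity
        refine Set.mem_iUnion.mpr ⟨⌊(∑ i, X i (ω i)) / (δ / 2)⌋₊, ?_, ?_⟩
        · have h1 := Nat.floor_le (div_nonneg hS0 hd2.le)
          calc ((⌊(∑ i, X i (ω i)) / (δ / 2)⌋₊ : ℝ)) * (δ / 2)
              ≤ ((∑ i, X i (ω i)) / (δ / 2)) * (δ / 2) :=
                mul_le_mul_of_nonneg_right h1 hd2.le
            _ = ∑ i, X i (ω i) := div_mul_cancel₀ _ (ne_of_gt hd2)
        · have h1 := Nat.lt_floor_add_one ((∑ i, X i (ω i)) / (δ / 2))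
          exact (div_lt_iff₀ hd2).mp h1
      have h0 : μ (Set.univ : Set (∀ i, Ω i)) = 0 :=
        measure_mono_null hsub (measure_iUnion_null fun k => h k)
      simp [measure_univ] at h0
    have hL0 : (0 : ℝ) ≤ ((k : ℝ) + 1) * (δ / 2) := by positivity
    have hsub : ({ω | (k : ℝ) * (δ / 2) ≤ (∑ i, X i (ω i)) ∧
          (∑ i, X i (ω i)) < ((k : ℝ) + 1) * (δ / 2)} ×ˢ
        ({ωr | δ ≤ Xr ωr} ×ˢ
          Set.Ioc (((k : ℝ) + 1) * (δ / 2)) (((k : ℝ) + 1) * (δ / 2) + δ / 2))) ⊆ A := by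
      rintro ⟨ω, ωr, ℓ⟩ ⟨hω, hωr, hℓ⟩
      simp only [Set.mem_setOf_eq, Set.mem_Ioc] at hω hωr hℓ
      exact ⟨lt_trans hω.2 hℓ.1,
        show ℓ ≤ (∑ i, X i (ω i)) + Xr ωr by nlinarith [hω.1, hωr, hℓ.2]⟩
    refine fun h0 => ?_
    have hlt : (0 : ℝ≥0∞) < Q ({ω | (k : ℝ) * (δ / 2) ≤ (∑ i, X i (ω i)) ∧
          (∑ i, X i (ω i)) < ((k : ℝ) + 1) * (δ / 2)} ×ˢ
        ({ωr | δ ≤ Xr ωr} ×ˢ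
          Set.Ioc (((k : ℝ) + 1) * (δ / 2)) (((k : ℝ) + 1) * (δ / 2) + δ / 2))) := by
      rw [hQdef, hνdef, Measure.prod_prod, Measure.prod_prod]
      exact ENNReal.mul_pos hk (ne_of_gt (ENNReal.mul_pos hn
        (ne_of_gt (exp_aux_pos p hp hL0 (by positivity)))))
    exact absurd (measure_mono_null hsub h0) (ne_of_gt hlt)
  -- the null part
  have hnull : Q (A ∩ Cᶜ) = 0 := by
    have hcompl : Q {z : (∀ i, Ω i) × (Ωr × ℝ) |
        (∑ i, F i (z.1 i)) + G z.2.1 z.2.2 ∈ B}ᶜ = 0 := by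
      rw [measure_compl hC₀ (measure_ne_top _ _), hone, measure_univ, tsub_self]
    have h1 : ∫⁻ ω, ν (Prod.mk ω ⁻¹' {z : (∀ i, Ω i) × (Ωr × ℝ) |
        (∑ i, F i (z.1 i)) + G z.2.1 z.2.2 ∈ B}ᶜ) ∂μ = 0 := by
      rw [← Measure.prod_apply hC₀.compl]; exact hcompl
    have h2 : ∀ᵐ ω ∂μ, ν (Prod.mk ω ⁻¹' {z : (∀ i, Ω i) × (Ωr × ℝ) |
        (∑ i, F i (z.1 i)) + G z.2.1 z.2.2 ∈ B}ᶜ) = 0 :=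
      (lintegral_eq_zero_iff (measurable_measure_prodMk_left hC₀.compl)).mp h1
    have key : (fun ω => ν (Prod.mk ω ⁻¹' (A ∩ Cᶜ))) =ᵐ[μ] 0 := by
      filter_upwards [h2] with ω hω
      rw [hνdef, Measure.prod_apply (measurable_prodMk_left (hA.inter hC.compl))]
      rw [hνdef, Measure.prod_apply (measurable_prodMk_left hC₀.compl)] at hω
      have hae : ∀ᵐ ωr ∂Pr, expMeasure p (Prod.mk ωr ⁻¹' (Prod.mk ω ⁻¹'
          {z : (∀ i, Ω i) × (Ωr × ℝ) | (∑ i, F i (z.1 i)) + G z.2.1 z.2.2 ∈ B}ᶜ)) = 0 :=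
        (lintegral_eq_zero_iff (measurable_measure_prodMk_left
          (measurable_prodMk_left hC₀.compl))).mp hω
      show ∫⁻ ωr, expMeasure p (Prod.mk ωr ⁻¹' (Prod.mk ω ⁻¹' (A ∩ Cᶜ))) ∂Pr = 0
      rw [lintegral_eq_zero_iff (measurable_measure_prodMk_left
        (measurable_prodMk_left (hA.inter hC.compl)))]
      filter_upwards [hae] with ωr hωr
      have hS0 : (0 : ℝ) ≤ ∑ i, X i (ω i) := Finset.sum_nonneg fun i _ => hX_nonneg i _
      have hTmeas : MeasurableSet {t : ℝ | (∑ i, F i (ω i)) + G ωr t ∈ B}ᶜ :=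
        (((measurable_const.add (hG.comp (measurable_const.prodMk measurable_id)))) hB).compl
      show expMeasure p (Prod.mk ωr ⁻¹' (Prod.mk ω ⁻¹' (A ∩ Cᶜ))) = 0
      refine le_antisymm ?_ (zero_le (a := _))
      calc expMeasure p (Prod.mk ωr ⁻¹' (Prod.mk ω ⁻¹' (A ∩ Cᶜ)))
          ≤ expMeasure p {x : ℝ | (∑ i, X i (ω i)) < x ∧
              x ≤ (∑ i, X i (ω i)) + Xr ωr ∧
              x - (∑ i, X i (ω i)) ∈ {t : ℝ | (∑ i, F i (ω i)) + G ωr t ∈ B}ᶜ} := by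
            refine measure_mono fun ℓ hℓ => ?_
            exact ⟨hℓ.1.1, hℓ.1.2, hℓ.2⟩
        _ ≤ expMeasure p {t : ℝ | (∑ i, F i (ω i)) + G ωr t ∈ B}ᶜ :=
            exp_aux_le p hp hS0 hTmeas
        _ = 0 := hωr
    rw [hQdef, Measure.prod_apply (hA.inter hC.compl), lintegral_congr_ae key]
    simp
  -- conclusion
  rw [cond_apply hA]
  have hAC : Q (A ∩ C) = Q A := by
    have h := measure_inter_add_diff (μ := Q) A hC
    rwa [Set.diff_eq, hnull, add_zero] at h
  rw [hAC]
  exact ENNReal.inv_mul_cancel hQA_pos (measure_ne_top _ _)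
end
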